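/- Let t_i | n for 1 ≤ i ≤ k, with n ≥ 1. The number of solutions of x_1 + ... + x_k ≡ 0 (mod n) with gcd(x_i, n) = t_i for all i equals (1/n) Σ_{q=1}^{n} Π_{i=1}^{k} c_{n/t_i}(q), where c_m denotes the Ramanujan sum. -/

import Mathlib

set_option maxHeartbeats 1000000

open Complex Finset

/-- The Ramanujan sum `c_n(m) = ∑_{j=1, gcd(j,n)=1}^{n} e(jm/n)`. -/
noncomputable def ramanujanSum (n : ℕ) (m : ℤ) : ℂ :=
  ∑ j ∈ (Finset.Icc 1 n).filter (fun j => Nat.gcd j n = 1),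
    Complex.exp (2 * Real.pi * Complex.I * j * m / n)

private lemma exp_period' (n : ℕ) (hn : n ≠ 0) (q a c : ℕ) :
    Complex.exp (2 * Real.pi * Complex.I * q * ((a + n * c : ℕ) : ℂ) / n) =
    Complex.exp (2 * Real.pi * Complex.I * q * (a : ℂ) / n) := by
  have hnc : (n : ℂ) ≠ 0 := Nat.cast_ne_zero.mpr hn
  have harg : (2 * (Real.pi:ℂ) * I * q * ((a + n * c : ℕ) : ℂ) / n)
      = 2 * (Real.pi:ℂ) * I * q * (a : ℂ) / n
        + ((q * c : ℕ) : ℤ) * (2 * Real.pi * I) := by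
    push_cast
    field_simp
  rw [harg, Complex.exp_add, Complex.exp_int_mul_two_pi_mul_I, mul_one]

private lemma exp_period (n : ℕ) (hn : n ≠ 0) (q a : ℕ) :
    Complex.exp (2 * Real.pi * Complex.I * q * ((a % n : ℕ) : ℂ) / n) =
    Complex.exp (2 * Real.pi * Complex.I * q * (a : ℂ) / n) := by
  conv_rhs => rw [← Nat.mod_add_div a n]
  exact (exp_period' n hn q (a % n) (a / n)).symm

private lemma orth (n : ℕ) (hn : 0 < n) (a : ZMod n) :
    ∑ q ∈ Finset.Icc 1 n, Complex.exp (2 * Real.pi * Complex.I * q * ((a.val : ℕ) : ℂ) / n)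
      = if a = 0 then (n : ℂ) else 0 := by
  haveI : NeZero n := ⟨hn.ne'⟩
  have hnc : (n : ℂ) ≠ 0 := Nat.cast_ne_zero.mpr hn.ne'
  set z := Complex.exp (2 * Real.pi * Complex.I * ((a.val : ℕ) : ℂ) / n) with hz
  have hterm : ∀ q : ℕ,
      Complex.exp (2 * Real.pi * Complex.I * q * ((a.val : ℕ) : ℂ) / n) = z ^ q := by
    intro q
    rw [hz, ← Complex.exp_nat_mul]
    ring_nf
  simp_rw [hterm]
  by_cases ha : a = 0
  · subst ha
    have hz1 : z = 1 := by simp [hz]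
    simp [hz1, Nat.card_Icc]
  · have hval : 0 < a.val :=
      Nat.pos_of_ne_zero (fun h => ha ((ZMod.val_eq_zero a).mp h))
    have hprim := Complex.isPrimitiveRoot_exp n hn.ne'
    have hzp : z = Complex.exp (2 * Real.pi * Complex.I / n) ^ a.val := by
      rw [← Complex.exp_nat_mul, hz]; ring_nf
    have hz1 : z ≠ 1 := by
      rw [hzp]
      exact hprim.pow_ne_one_of_pos_of_lt hval.ne' (ZMod.val_lt a)
    have hzn : z ^ n = 1 := by
      rw [hz, ← Complex.exp_nat_mul,
        show (n:ℂ) * (2 * Real.pi * I * ((a.val : ℕ) : ℂ) / n)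
          = ((a.val : ℕ) : ℤ) * (2 * Real.pi * I) by push_cast; field_simp,
        Complex.exp_int_mul_two_pi_mul_I]
    have hins : Finset.Icc 0 n = insert 0 (Finset.Icc 1 n) := by
      ext x; simp; omega
    have hrange : Finset.range (n + 1) = Finset.Icc 0 n := by
      ext x; simp
    have hgeom : ∑ q ∈ Finset.range (n + 1), z ^ q = 1 := by
      rw [geom_sum_eq hz1, pow_succ, hzn, one_mul, div_self]
      exact sub_ne_zero.mpr hz1
    rw [hrange, hins, Finset.sum_insert (by simp), pow_zero] at hgeom
    rw [if_neg ha]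
    linear_combination hgeom

private lemma sum_gcd_eq_ramanujan (n t : ℕ) [NeZero n] (hn : 0 < n) (ht : t ∣ n) (q : ℕ) :
    ∑ x ∈ Finset.univ.filter (fun x : ZMod n => Nat.gcd x.val n = t),
        Complex.exp (2 * Real.pi * Complex.I * q * ((x.val : ℕ) : ℂ) / n)
      = ramanujanSum (n / t) (q : ℤ) := by
  have htpos : 0 < t := Nat.pos_of_dvd_of_pos ht hn
  set m := n / t with hm
  have hmpos : 0 < m := Nat.div_pos (Nat.le_of_dvd hn ht) htpos
  have htm : t * m = n := Nat.mul_div_cancel' ht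
  have htc : (t : ℂ) ≠ 0 := Nat.cast_ne_zero.mpr htpos.ne'
  have hmc : (m : ℂ) ≠ 0 := Nat.cast_ne_zero.mpr hmpos.ne'
  have hnc : (n : ℂ) ≠ 0 := Nat.cast_ne_zero.mpr hn.ne'
  -- forward map from ZMod side to Icc side
  set g : ZMod n → ℕ := fun x => if x = 0 then m else x.val / t with hg
  set f : ℕ → ZMod n := fun j => ((t * j : ℕ) : ZMod n) with hf
  rw [ramanujanSum]
  refine Finset.sum_nbij' g f ?_ ?_ ?_ ?_ ?_
  · -- g maps into the Icc filter
    intro x hx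
    simp only [Finset.mem_filter, Finset.mem_univ, true_and] at hx
    by_cases hx0 : x = 0
    · have hxval : x.val = 0 := by simp [hx0]
      have htn : t = n := by rw [← hx]; simp [hxval]
      have hm1 : m = 1 := by rw [hm, htn, Nat.div_self hn]
      simp [hg, hx0, hm1]
    · have hval : 0 < x.val :=
        Nat.pos_of_ne_zero (fun h => hx0 ((ZMod.val_eq_zero x).mp h))
      have htdvd : t ∣ x.val := hx ▸ Nat.gcd_dvd_left _ _
      have hxj : t * (x.val / t) = x.val := Nat.mul_div_cancel' htdvd
      have hj1 : 1 ≤ x.val / t := Nat.one_le_div_iff htpos |>.mpr (Nat.le_of_dvd hval htdvd)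
      have hxle : x.val ≤ t * m := by rw [htm]; exact (ZMod.val_lt x).le
      have hjm : x.val / t ≤ m := by
        have h2 : x.val / t ≤ t * m / t := Nat.div_le_div_right hxle
        rwa [Nat.mul_div_cancel_left _ htpos] at h2
      have hgcd : t * Nat.gcd (x.val / t) m = t := by
        rw [← Nat.gcd_mul_left, hxj, htm, hx]
      have : Nat.gcd (x.val / t) m = 1 :=
        Nat.eq_of_mul_eq_mul_left htpos (by rw [hgcd, mul_one])
      simp only [Finset.mem_filter, Finset.mem_Icc, hg, if_neg hx0]
      exact ⟨⟨hj1, hjm⟩, this⟩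
  · -- f maps into the ZMod filter
    intro j hj
    simp only [Finset.mem_filter, Finset.mem_Icc] at hj
    obtain ⟨⟨hj1, hjm⟩, hjcop⟩ := hj
    simp only [Finset.mem_filter, Finset.mem_univ, true_and, hf]
    have hval : ((t * j : ℕ) : ZMod n).val = (t * j) % n := ZMod.val_natCast _ _
    rw [hval]
    have : Nat.gcd ((t * j) % n) n = Nat.gcd (t * j) n := Nat.ModEq.gcd_eq (Nat.mod_modEq _ _)
    rw [this, ← htm, Nat.gcd_mul_left, hjcop, mul_one]
  · -- f ∘ g = id on ZMod filter
    intro x hx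
    simp only [Finset.mem_filter, Finset.mem_univ, true_and] at hx
    by_cases hx0 : x = 0
    · have hxval : x.val = 0 := by simp [hx0]
      have htn : t = n := by rw [← hx]; simp [hxval]
      simp only [hg, hf, if_pos hx0]
      rw [htm, hx0]
      exact ZMod.natCast_self n
    · have htdvd : t ∣ x.val := hx ▸ Nat.gcd_dvd_left _ _
      have hxj : t * (x.val / t) = x.val := Nat.mul_div_cancel' htdvd
      simp only [hg, hf, if_neg hx0]
      rw [hxj]
      exact ZMod.natCast_rightInverse x
  · -- g ∘ f = id on Icc filter
    intro j hj
    simp only [Finset.mem_filter, Finset.mem_Icc] at hj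
    obtain ⟨⟨hj1, hjm⟩, hjcop⟩ := hj
    by_cases hjem : j = m
    · have hm1 : m = 1 := by
        have hdvd : m ∣ 1 := by rw [← hjcop, hjem, Nat.gcd_self]
        exact Nat.eq_one_of_dvd_one hdvd
      have hf0 : f j = 0 := by
        simp only [hf, hjem, htm]
        exact ZMod.natCast_self n
      rw [hg]
      simp only [hf0, if_pos rfl]
      rw [hjem]
      simp
    · have hjltm : j < m := lt_of_le_of_ne hjm hjem
      have htjn : t * j < n := by
        rw [← htm]
        exact (mul_lt_mul_iff_right₀ htpos).mpr hjltm
      have hfval : (f j).val = t * j := by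
        simp only [hf, ZMod.val_natCast]
        exact Nat.mod_eq_of_lt htjn
      have hfne : f j ≠ 0 := by
        intro h
        have : (f j).val = 0 := by simp [h]
        rw [hfval] at this
        exact (Nat.mul_ne_zero htpos.ne' (by omega : j ≠ 0)) this
      simp only [hg, if_neg hfne, hfval]
      exact Nat.mul_div_cancel_left j htpos
  · -- values agree
    intro x hx
    simp only [Finset.mem_filter, Finset.mem_univ, true_and] at hx
    by_cases hx0 : x = 0
    · have hxval : x.val = 0 := by simp [hx0]
      have htn : t = n := by rw [← hx]; simp [hxval]
      have hm1 : m = 1 := by rw [hm, htn, Nat.div_self hn]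
      simp only [hg, if_pos hx0, hxval, hm1]
      push_cast
      rw [show 2 * (Real.pi:ℂ) * I * q * 0 / n = 0 by ring]
      rw [show 2 * (Real.pi:ℂ) * I * 1 * q / 1 = (q : ℤ) * (2 * Real.pi * I) by push_cast; ring]
      rw [Complex.exp_zero, Complex.exp_int_mul_two_pi_mul_I]
    · have htdvd : t ∣ x.val := hx ▸ Nat.gcd_dvd_left _ _
      have hxj : t * (x.val / t) = x.val := Nat.mul_div_cancel' htdvd
      simp only [hg, if_neg hx0]
      congr 1
      have hncast : (n : ℂ) = (t : ℂ) * (m : ℂ) := by rw [← htm]; push_cast; ring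
      rw [show ((x.val : ℕ) : ℂ) = (t : ℂ) * ((x.val / t : ℕ) : ℂ) by
        rw [← hxj, Nat.mul_div_cancel_left _ htpos]; push_cast; ring]
      rw [hncast]
      push_cast
      field_simp

theorem count_restricted_congruence_ramanujan (n : ℕ) (hn : 0 < n) (k : ℕ)
    (t : Fin k → ℕ) (ht : ∀ i, t i ∣ n) :
    (Nat.card {x : Fin k → ZMod n //
        (∑ i, x i) = 0 ∧ ∀ i, Nat.gcd (x i).val n = t i} : ℂ) =
      (1 / n) * ∑ q ∈ Finset.Icc 1 n, ∏ i, ramanujanSum (n / t i) (q : ℤ) := by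
  classical
  haveI : NeZero n := ⟨hn.ne'⟩
  have hnc : (n : ℂ) ≠ 0 := Nat.cast_ne_zero.mpr hn.ne'
  set S : Fin k → Finset (ZMod n) :=
    fun i => Finset.univ.filter (fun a : ZMod n => Nat.gcd a.val n = t i) with hS
  set B : Finset (Fin k → ZMod n) := Fintype.piFinset S with hB
  have hcard : (Nat.card {x : Fin k → ZMod n //
        (∑ i, x i) = 0 ∧ ∀ i, Nat.gcd (x i).val n = t i} : ℂ)
      = ∑ x ∈ B, (if (∑ i, x i) = 0 then (1 : ℂ) else 0) := by
    rw [Finset.sum_boole, Nat.card_eq_fintype_card, Fintype.card_subtype]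
    congr 2
    ext x
    simp [hB, Fintype.mem_piFinset, hS, and_comm]
  rw [hcard]
  have hind : ∀ x : Fin k → ZMod n, (if (∑ i, x i) = 0 then (1 : ℂ) else 0)
      = (1 / n) * ∑ q ∈ Finset.Icc 1 n,
          Complex.exp (2 * Real.pi * Complex.I * q * (((∑ i, x i).val : ℕ) : ℂ) / n) := by
    intro x
    rw [orth n hn]
    by_cases h : (∑ i, x i) = 0
    · rw [if_pos h, if_pos h, one_div, inv_mul_cancel₀ hnc]
    · rw [if_neg h, if_neg h, mul_zero]
  simp_rw [hind]
  rw [← Finset.mul_sum, Finset.sum_comm]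
  congr 1
  refine Finset.sum_congr rfl ?_
  intro q hq
  have hsplit : ∀ x : Fin k → ZMod n,
      Complex.exp (2 * Real.pi * Complex.I * q * (((∑ i, x i).val : ℕ) : ℂ) / n)
        = ∏ i, Complex.exp (2 * Real.pi * Complex.I * q * (((x i).val : ℕ) : ℂ) / n) := by
    intro x
    have h1 : (∑ i, x i) = ((∑ i, (x i).val : ℕ) : ZMod n) := by
      rw [Nat.cast_sum]
      exact Finset.sum_congr rfl (fun i _ => (ZMod.natCast_rightInverse (x i)).symm)
    rw [h1, ZMod.val_natCast, exp_period n hn.ne' q]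
    rw [show (2 * (Real.pi:ℂ) * I * q * ((∑ i, (x i).val : ℕ) : ℂ) / n)
        = ∑ i, 2 * (Real.pi:ℂ) * I * q * (((x i).val : ℕ) : ℂ) / n by
      push_cast
      rw [Finset.mul_sum, Finset.sum_div]]
    exact Complex.exp_sum _ _
  calc ∑ x ∈ B, Complex.exp (2 * Real.pi * Complex.I * q * (((∑ i, x i).val : ℕ) : ℂ) / n)
      = ∑ x ∈ B, ∏ i, Complex.exp (2 * Real.pi * Complex.I * q * (((x i).val : ℕ) : ℂ) / n) :=
        Finset.sum_congr rfl (fun x _ => hsplit x)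
    _ = ∏ i, ∑ a ∈ S i,
          Complex.exp (2 * Real.pi * Complex.I * q * ((a.val : ℕ) : ℂ) / n) :=
        by rw [hB]
           exact (Finset.prod_univ_sum S
             (fun i a => Complex.exp (2 * Real.pi * Complex.I * q * ((a.val : ℕ) : ℂ) / n))).symm
    _ = ∏ i, ramanujanSum (n / t i) (q : ℤ) :=
        Finset.prod_congr rfl (fun i _ => sum_gcd_eq_ramanujan n (t i) hn (ht i) q)
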